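/- For every H ∈ (0,1) and every t ≥ 0, (2H+2) · e^{−(1+H)t} · ∫₀^1 ∫₀^{e^t} (u^{2H} + v^{2H} − |u−v|^{2H})/2 dv du = B_H(t), where B_H(t) = [2(1+H)(e^{Ht} + e^{−Ht}) − (e^{(1+H)t} + e^{−(1+H)t}) + (e^{t/2} − e^{−t/2})^{2H+2}]/(2+4H). -/

import Mathlib

open Real intervalIntegral

lemma cont_rpow {r : ℝ} (hr : 0 ≤ r) : Continuous fun x : ℝ => x ^ r :=
  continuous_id.rpow_const fun _ => Or.inr hr

lemma abs_int {r : ℝ} (hr : 0 < r) {c : ℝ} (hc : 0 ≤ c) :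
    ∫ w in (0:ℝ)..c, |w| ^ r = c ^ (r + 1) / (r + 1) := by
  rw [intervalIntegral.integral_congr (g := fun w : ℝ => w ^ r) ?_,
    integral_rpow (Or.inl (by linarith)), Real.zero_rpow (by positivity), sub_zero]
  intro w hw
  rw [Set.uIcc_of_le hc] at hw
  simp [abs_of_nonneg hw.1]

lemma abs_full {r : ℝ} (hr : 0 < r) {u b : ℝ} (hu : 0 ≤ u) (hub : u ≤ b) :
    ∫ v in (0:ℝ)..b, |u - v| ^ r = (u ^ (r + 1) + (b - u) ^ (r + 1)) / (r + 1) := by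
  have hcont : Continuous fun w : ℝ => |w| ^ r :=
    continuous_abs.rpow_const fun _ => Or.inr hr.le
  have h1 : ∫ v in (0:ℝ)..b, |u - v| ^ r = ∫ w in (-u)..(b - u), |w| ^ r := by
    simp only [abs_sub_comm u]
    rw [show (fun v : ℝ => |v - u| ^ r) = fun v : ℝ => (fun w : ℝ => |w| ^ r) (v - u) from rfl,
      intervalIntegral.integral_comp_sub_right (fun w : ℝ => |w| ^ r) u]
    norm_num
  have h2 : ∫ w in (-u)..(0:ℝ), |w| ^ r = u ^ (r + 1) / (r + 1) := by
    rw [← neg_zero, ← intervalIntegral.integral_comp_neg (fun w : ℝ => |w| ^ r)]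
    simp only [abs_neg]
    exact abs_int hr hu
  rw [h1, ← intervalIntegral.integral_add_adjacent_intervals (b := 0)
    (hcont.intervalIntegrable _ _) (hcont.intervalIntegrable _ _), h2,
    abs_int hr (by linarith : (0:ℝ) ≤ b - u)]
  ring

lemma inner_int {H : ℝ} (hH : 0 < H) {b u : ℝ} (hu : 0 ≤ u) (hub : u ≤ b) :
    ∫ v in (0:ℝ)..b, (u ^ (2*H) + v ^ (2*H) - |u - v| ^ (2*H)) / 2
    = (b * u ^ (2*H) + (b ^ (2*H+1) - u ^ (2*H+1) - (b - u) ^ (2*H+1)) / (2*H+1)) / 2 := by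
  have h2H : (0:ℝ) < 2*H := by linarith
  have i1 : IntervalIntegrable (fun v : ℝ => u ^ (2*H) + v ^ (2*H)) MeasureTheory.volume 0 b :=
    (continuous_const.add (cont_rpow h2H.le)).intervalIntegrable _ _
  have i2 : IntervalIntegrable (fun v : ℝ => |u - v| ^ (2*H)) MeasureTheory.volume 0 b :=
    (((continuous_const.sub continuous_id).abs).rpow_const fun _ => Or.inr h2H.le).intervalIntegrable _ _
  rw [intervalIntegral.integral_div, intervalIntegral.integral_sub i1 i2,
    intervalIntegral.integral_add (intervalIntegrable_const) ((cont_rpow h2H.le).intervalIntegrable _ _),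
    intervalIntegral.integral_const, integral_rpow (Or.inl (by linarith)),
    abs_full h2H hu hub, Real.zero_rpow (by positivity)]
  have : (2*H+1) ≠ 0 := by positivity
  field_simp
  ring

lemma alg_key {H P Bv T1 T2 Y X X' S : ℝ} (hH : 0 < H)
    (E1 : P * Bv = X') (E2 : P * T1 = X) (E3 : P * T2 = Y) (E5 : P * Y = 1) :
    (2*H+2) * P * ((Bv/(2*H+1) + (T1 - 1/(2*H+2) - (T2 - Y*S)/(2*H+2))/(2*H+1))/2)
      = (2*(1+H)*(X + X') - (Y + P) + S)/(2+4*H) := by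
  have hP : P ≠ 0 := left_ne_zero_of_mul_eq_one E5
  have hBv : Bv = X' / P := by rw [eq_div_iff hP, mul_comm]; exact E1
  have hT1 : T1 = X / P := by rw [eq_div_iff hP, mul_comm]; exact E2
  have hT2 : T2 = Y / P := by rw [eq_div_iff hP, mul_comm]; exact E3
  have hY : Y = 1 / P := by rw [eq_div_iff hP, mul_comm]; exact E5
  have h1 : (2*H+1) ≠ 0 := by positivity
  have h2 : (2*H+2) ≠ 0 := by positivity
  have h3 : (2+4*H) ≠ 0 := by positivity
  subst hBv hT1 hY hT2
  field_simp
  ring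


/-- The correlation function `B_H` (formula (18)) of the stationary process dual to the
integrated fractional Brownian motion of Hurst index `H`. -/
noncomputable def BH (H t : ℝ) : ℝ :=
  (2*(1+H)*(Real.exp (H*t) + Real.exp (-H*t))
    - (Real.exp ((1+H)*t) + Real.exp (-(1+H)*t))
    + (Real.exp (t/2) - Real.exp (-t/2)) ^ (2*H+2)) / (2+4*H)

/-- the normalized correlation of the dual stationary process equals `B_H`:
`(2H+2) e^{−(1+H)t} ∫₀^1 ∫₀^{e^t} (u^{2H}+v^{2H}−|u−v|^{2H})/2 dv du = B_H(t)`. -/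
theorem statement2 (H t : ℝ) (hH : H ∈ Set.Ioo (0:ℝ) 1) (ht : 0 ≤ t) :
    (2*H+2) * Real.exp (-(1+H)*t) *
      (∫ u in (0:ℝ)..1, ∫ v in (0:ℝ)..(Real.exp t),
        (u ^ (2*H) + v ^ (2*H) - |u - v| ^ (2*H)) / 2)
      = BH H t := by

  obtain ⟨hH0, hH1⟩ := hH
  set b := Real.exp t with hb
  have hb1 : (1:ℝ) ≤ b := Real.one_le_exp ht
  have h2H : (0:ℝ) < 2*H := by linarith
  -- replace inner integral
  have hcongr : ∫ u in (0:ℝ)..1, ∫ v in (0:ℝ)..b,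
        (u ^ (2*H) + v ^ (2*H) - |u - v| ^ (2*H)) / 2
      = ∫ u in (0:ℝ)..1,
        (b * u ^ (2*H) + (b ^ (2*H+1) - u ^ (2*H+1) - (b - u) ^ (2*H+1)) / (2*H+1)) / 2 := by
    apply intervalIntegral.integral_congr
    intro u hu
    rw [Set.uIcc_of_le (by norm_num)] at hu
    exact inner_int hH0 hu.1 (le_trans hu.2 hb1)
  rw [hcongr]
  -- integrabilities for outer integral
  have c1 : Continuous fun u : ℝ => b * u ^ (2*H) := continuous_const.mul (cont_rpow h2H.le)
  have c2 : Continuous fun u : ℝ => u ^ (2*H+1) := cont_rpow (by linarith)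
  have c3 : Continuous fun u : ℝ => (b - u) ^ (2*H+1) :=
    (continuous_const.sub continuous_id).rpow_const fun _ => Or.inr (by linarith)
  have hlast : ∫ u in (0:ℝ)..1, (b - u) ^ (2*H+1)
      = (b ^ (2*H+2) - (b-1) ^ (2*H+2)) / (2*H+2) := by
    rw [show (fun u : ℝ => (b - u) ^ (2*H+1)) = fun u : ℝ => (fun w : ℝ => w ^ (2*H+1)) (b - u) from rfl,
      intervalIntegral.integral_comp_sub_left (fun w : ℝ => w ^ (2*H+1)) b,
      integral_rpow (Or.inl (by linarith))]
    norm_num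
    ring_nf
  have i1 : ∫ u in (0:ℝ)..1, u ^ (2*H) = 1/(2*H+1) := by
    rw [integral_rpow (Or.inl (by linarith)), Real.one_rpow, Real.zero_rpow (by positivity)]
    norm_num
  have i2 : ∫ u in (0:ℝ)..1, u ^ (2*H+1) = 1/(2*H+2) := by
    rw [integral_rpow (Or.inl (by linarith)), Real.one_rpow, Real.zero_rpow (by positivity)]
    norm_num
    ring_nf
  have heq : (fun u : ℝ =>
        (b * u ^ (2*H) + (b ^ (2*H+1) - u ^ (2*H+1) - (b - u) ^ (2*H+1)) / (2*H+1)) / 2)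
      = fun u : ℝ => (b/2) * u ^ (2*H) +
        ((b ^ (2*H+1) / (2*H+1) / 2 - (1/(2*H+1)/2) * u ^ (2*H+1)) - (1/(2*H+1)/2) * (b - u) ^ (2*H+1)) := by
    funext u
    have h1 : (2*H+1) ≠ 0 := by positivity
    field_simp
  rw [heq, intervalIntegral.integral_add ((continuous_const.fun_mul (cont_rpow h2H.le)).intervalIntegrable _ _)
      (((continuous_const.fun_sub (continuous_const.fun_mul c2)).fun_sub (continuous_const.fun_mul c3)).intervalIntegrable _ _),
    intervalIntegral.integral_sub
      ((continuous_const.fun_sub (continuous_const.fun_mul c2)).intervalIntegrable _ _)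
      ((continuous_const.fun_mul c3).intervalIntegrable _ _),
    intervalIntegral.integral_sub (intervalIntegrable_const) ((continuous_const.fun_mul c2).intervalIntegrable _ _),
    intervalIntegral.integral_const_mul, intervalIntegral.integral_const_mul,
    intervalIntegral.integral_const_mul, intervalIntegral.integral_const,
    i1, i2, hlast]
  -- now pure algebra with exponentials
  have hSnn : (0:ℝ) ≤ Real.exp (t/2) - Real.exp (-t/2) :=
    sub_nonneg.mpr (Real.exp_le_exp.mpr (by linarith))
  have hbp1 : b ^ (2*H+1) = Real.exp (t*(2*H+1)) := (Real.exp_mul t (2*H+1)).symm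
  have hbp2 : b ^ (2*H+2) = Real.exp (t*(2*H+2)) := (Real.exp_mul t (2*H+2)).symm
  have e4 : (b - 1) ^ (2*H+2)
      = Real.exp ((1+H)*t) * (Real.exp (t/2) - Real.exp (-t/2)) ^ (2*H+2) := by
    have h1 : b - 1 = Real.exp (t/2) * (Real.exp (t/2) - Real.exp (-t/2)) := by
      rw [mul_sub, ← Real.exp_add, ← Real.exp_add,
        show t/2 + t/2 = t from by ring, show t/2 + -t/2 = (0:ℝ) from by ring,
        Real.exp_zero, hb]
    rw [h1, Real.mul_rpow (Real.exp_pos _).le hSnn, ← Real.exp_mul,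
      show t/2*(2*H+2) = (1+H)*t from by ring]
  rw [hbp1, hbp2, e4, BH]
  have E1 : Real.exp (-(1+H)*t) * b = Real.exp (-H*t) := by
    rw [hb, ← Real.exp_add]; congr 1; ring
  have E2 : Real.exp (-(1+H)*t) * Real.exp (t*(2*H+1)) = Real.exp (H*t) := by
    rw [← Real.exp_add]; congr 1; ring
  have E3 : Real.exp (-(1+H)*t) * Real.exp (t*(2*H+2)) = Real.exp ((1+H)*t) := by
    rw [← Real.exp_add]; congr 1; ring
  have E5 : Real.exp (-(1+H)*t) * Real.exp ((1+H)*t) = 1 := by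
    rw [← Real.exp_add, show -(1+H)*t + (1+H)*t = 0 from by ring, Real.exp_zero]
  have key := alg_key (S := (Real.exp (t/2) - Real.exp (-t/2)) ^ (2*H+2)) hH0 E1 E2 E3 E5
  have h1 : (2*H+1) ≠ 0 := by positivity
  have h2 : (2*H+2) ≠ 0 := by positivity
  have h3 : (2+4*H) ≠ 0 := by positivity
  simp only [smul_eq_mul]
  refine Eq.trans ?_ key
  ring
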